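/- Let G be a profinite group. The category of discrete G-modules satisfies Grothendieck's axiom Ab4* (that is, arbitrary products exist and the product of any family of epimorphisms in the category is again an epimorphism; equivalently, product functors are exact) if and only if G is finite. -/

import Mathlib

open Function

/-- A module over the group ring `ℤ[G]` is a *discrete* `G`-module if every element is
fixed by some open normal subgroup of `G`. -/
def IsDiscreteGMod (G : Type) [Group G] [TopologicalSpace G]
    (M : ModuleCat.{0} (MonoidAlgebra ℤ G)) : Prop :=
  ∀ x : M, ∃ H : Subgroup G, H.Normal ∧ IsOpen (H : Set G) ∧
    ∀ h ∈ H, (MonoidAlgebra.of ℤ G h) • x = x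

/-- A family of elements of a product of `ℤ[G]`-modules lies in the largest discrete
submodule of the product iff it is fixed componentwise by a single open normal subgroup. -/
def FixedBySomeOpenNormal (G : Type) [Group G] [TopologicalSpace G]
    {ι : Type} (M : ι → ModuleCat.{0} (MonoidAlgebra ℤ G)) (x : ∀ i, M i) : Prop :=
  ∃ K : Subgroup G, K.Normal ∧ IsOpen (K : Set G) ∧
    ∀ i, ∀ k ∈ K, (MonoidAlgebra.of ℤ G k) • x i = x i


/-- Augmentation ring hom on a group algebra. -/
noncomputable def augHom (Q : Type) [Group Q] : MonoidAlgebra ℤ Q →+* ℤ :=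
  ((MonoidAlgebra.lift ℤ ℤ Q) 1).toRingHom

lemma augHom_single (Q : Type) [Group Q] (a : Q) (n : ℤ) :
    augHom Q (MonoidAlgebra.single a n) = n := by
  simp [augHom, MonoidAlgebra.lift_single]

lemma augHom_apply (Q : Type) [Group Q] [Fintype Q] (x : MonoidAlgebra ℤ Q) :
    augHom Q x = ∑ a, x.coeff a := by
  rw [augHom, AlgHom.toRingHom_eq_coe, RingHom.coe_coe, MonoidAlgebra.lift_apply]
  rw [Finsupp.sum_fintype]
  · simp
  · intro a; simp

lemma fiber_card {Q : Type} [Group Q] (Z : Subgroup Q) (c : Q ⧸ Z) :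
    Nat.card {a : Q // (QuotientGroup.mk a : Q ⧸ Z) = c} = Nat.card Z := by
  obtain ⟨b, rfl⟩ := QuotientGroup.mk_surjective c
  refine Nat.card_congr ⟨fun a => ⟨b⁻¹ * a.1, ?_⟩, fun z => ⟨b * z.1, ?_⟩, ?_, ?_⟩
  · have := (QuotientGroup.eq).mp a.2
    simpa [mul_inv_rev] using inv_mem this
  · rw [QuotientGroup.eq]
    simp [mul_inv_rev, mul_assoc]
  · intro a; exact Subtype.ext (by simp)
  · intro z; exact Subtype.ext (by simp)

lemma key {Q : Type} [Group Q] [Finite Q] {q : Q} (hq : q ≠ 1)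
    (x : MonoidAlgebra ℤ Q) (hx : MonoidAlgebra.single q (1:ℤ) * x = x) :
    augHom Q x ≠ 1 := by
  classical
  have : Fintype Q := Fintype.ofFinite Q
  intro h1
  -- the set of invariance elements forms a subgroup
  set S : Subgroup Q :=
    { carrier := {z | MonoidAlgebra.single z (1:ℤ) * x = x}
      one_mem' := by
        show MonoidAlgebra.single (1:Q) (1:ℤ) * x = x
        rw [← MonoidAlgebra.one_def, one_mul]
      mul_mem' := by
        intro a b ha hb
        show MonoidAlgebra.single (a*b) (1:ℤ) * x = x
        rw [← one_mul (1:ℤ), ← MonoidAlgebra.single_mul_single, mul_assoc, hb, ha]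
      inv_mem' := by
        intro a ha
        show MonoidAlgebra.single a⁻¹ (1:ℤ) * x = x
        have ha' : MonoidAlgebra.single a (1:ℤ) * x = x := ha
        have h2 : MonoidAlgebra.single a⁻¹ (1:ℤ) * (MonoidAlgebra.single a (1:ℤ) * x)
            = MonoidAlgebra.single a⁻¹ (1:ℤ) * x := by rw [ha']
        rw [← mul_assoc, MonoidAlgebra.single_mul_single, inv_mul_cancel, one_mul,
          ← MonoidAlgebra.one_def, one_mul] at h2
        exact h2.symm } with hS
  set Z := Subgroup.zpowers q with hZdef
  have hZS : Z ≤ S := Subgroup.zpowers_le.mpr hx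
  have hxz : ∀ z ∈ Z, ∀ a, x.coeff (z * a) = x.coeff a := by
    intro z hz a
    have h := hZS (inv_mem hz)
    have h2 : (MonoidAlgebra.single z⁻¹ (1:ℤ) * x).coeff a = x.coeff a := by
      rw [(h : MonoidAlgebra.single z⁻¹ (1:ℤ) * x = x)]
    rwa [MonoidAlgebra.coeff_single_mul_apply, inv_inv, one_mul] at h2
  set y : Q → ℤ := fun a => x.coeff a⁻¹ with hy
  have hyz : ∀ z ∈ Z, ∀ a, y (a * z) = y a := by
    intro z hz a
    show x.coeff (a * z)⁻¹ = x.coeff a⁻¹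
    rw [mul_inv_rev]
    exact hxz z⁻¹ (inv_mem hz) a⁻¹
  have hsum : ∑ a, x.coeff a = ∑ a, y a :=
    (Fintype.sum_equiv (Equiv.inv Q) y x.coeff (fun a => rfl)).symm
  have hcard : (1:ℤ) = ∑ a, y a := by
    rw [← hsum, ← augHom_apply, h1]
  -- group the sum by fibers of the quotient map
  have hfib := Fintype.sum_fiberwise (QuotientGroup.mk (s := Z) : Q → Q ⧸ Z) y
  have hinner : ∀ c : Q ⧸ Z,
      (∑ a : {a : Q // (QuotientGroup.mk a : Q ⧸ Z) = c}, y a.1)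
        = (Nat.card Z : ℤ) * y (Quotient.out c) := by
    intro c
    have houtc : (QuotientGroup.mk (Quotient.out c) : Q ⧸ Z) = c := Quotient.out_eq c
    have : ∀ a : {a : Q // (QuotientGroup.mk a : Q ⧸ Z) = c}, y a.1 = y (Quotient.out c) := by
      intro a
      have hmem : (Quotient.out c)⁻¹ * a.1 ∈ Z := by
        rw [← QuotientGroup.eq]
        rw [houtc, a.2]
      have : a.1 = Quotient.out c * ((Quotient.out c)⁻¹ * a.1) := by group
      rw [this]
      exact hyz _ hmem _
    calc (∑ a : {a : Q // (QuotientGroup.mk a : Q ⧸ Z) = c}, y a.1)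
        = ∑ _a : {a : Q // (QuotientGroup.mk a : Q ⧸ Z) = c}, y (Quotient.out c) := by
          exact Finset.sum_congr rfl (fun a _ => this a)
      _ = (Nat.card {a : Q // (QuotientGroup.mk a : Q ⧸ Z) = c} : ℤ) * y (Quotient.out c) := by
          rw [Finset.sum_const, Nat.card_eq_fintype_card, Finset.card_univ, nsmul_eq_mul]
      _ = (Nat.card Z : ℤ) * y (Quotient.out c) := by rw [fiber_card]
  have hdvd : (Nat.card Z : ℤ) ∣ 1 := by
    refine ⟨∑ c : Q ⧸ Z, y (Quotient.out c), ?_⟩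
    rw [hcard, ← hfib]
    rw [Finset.mul_sum]
    exact Finset.sum_congr rfl (fun c _ => hinner c)
  have hone : Nat.card Z = 1 := by
    have : Nat.card Z ∣ 1 := Int.natCast_dvd_natCast.mp (by exact_mod_cast hdvd)
    exact Nat.dvd_one.mp this
  have : Nontrivial Z := by
    refine ⟨⟨⟨q, Subgroup.mem_zpowers q⟩, 1, fun h => hq ?_⟩⟩
    simpa using congrArg Subtype.val h
  have := Finite.one_lt_card_iff_nontrivial.mpr this
  omega

noncomputable instance instQMod (G : Type) [Group G] (H : Subgroup G) [H.Normal] :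
    Module (MonoidAlgebra ℤ G) (MonoidAlgebra ℤ (G ⧸ H)) :=
  Module.compHom _ (MonoidAlgebra.mapDomainRingHom ℤ (QuotientGroup.mk' H))

/-- `ℤ` with the trivial `G`-action, as a type synonym to avoid instance clashes. -/
def ZTriv (_G : Type) : Type := ℤ

instance (G : Type) : AddCommGroup (ZTriv G) := inferInstanceAs (AddCommGroup ℤ)

instance (G : Type) : One (ZTriv G) := inferInstanceAs (One ℤ)

/-- Reinterpret an element of `ZTriv G` as an integer. -/
def ZTriv.toInt {G : Type} (n : ZTriv G) : ℤ := n

noncomputable instance instZMod (G : Type) [Group G] : Module (MonoidAlgebra ℤ G) (ZTriv G) :=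
  Module.compHom _ (augHom G)

lemma smul_defQ {G : Type} [Group G] (H : Subgroup G) [H.Normal] (r : MonoidAlgebra ℤ G)
    (m : MonoidAlgebra ℤ (G ⧸ H)) :
    r • m = MonoidAlgebra.mapDomainRingHom ℤ (QuotientGroup.mk' H) r * m := by
  with_unfolding_all rfl

lemma smul_defZ {G : Type} [Group G] (r : MonoidAlgebra ℤ G) (n : ZTriv G) :
    r • n = (augHom G r * ZTriv.toInt n : ℤ) := by
  with_unfolding_all rfl

lemma mapDomainRingHom_single {G H : Type} [Group G] [Group H] (f : G →* H) (a : G) (b : ℤ) :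
    MonoidAlgebra.mapDomainRingHom ℤ f (MonoidAlgebra.single a b)
      = MonoidAlgebra.single (f a) b := by
  simp [MonoidAlgebra.mapDomainRingHom_apply, Finsupp.mapDomain_single]

lemma augHom_comp_mapDomain {G : Type} [Group G] (H : Subgroup G) [H.Normal]
    (r : MonoidAlgebra ℤ G) :
    augHom (G ⧸ H) (MonoidAlgebra.mapDomainRingHom ℤ (QuotientGroup.mk' H) r)
      = augHom G r := by
  have h : (augHom (G ⧸ H)).comp (MonoidAlgebra.mapDomainRingHom ℤ (QuotientGroup.mk' H))
      = augHom G := by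
    apply MonoidAlgebra.ringHom_ext
    · intro b
      simp [mapDomainRingHom_single, augHom_single]
    · intro a
      simp [mapDomainRingHom_single, augHom_single]
  exact RingHom.congr_fun h r

lemma fixQ {G : Type} [Group G] (H : Subgroup G) [H.Normal] (m : MonoidAlgebra ℤ (G ⧸ H))
    (h : G) (hh : h ∈ H) : (MonoidAlgebra.of ℤ G h) • m = m := by
  rw [smul_defQ, MonoidAlgebra.of_apply, mapDomainRingHom_single]
  have h1 : QuotientGroup.mk' H h = 1 := (QuotientGroup.eq_one_iff h).mpr hh
  rw [h1, ← MonoidAlgebra.one_def, one_mul]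

lemma fixZ {G : Type} [Group G] (h : G) (n : ZTriv G) : (MonoidAlgebra.of ℤ G h) • n = n := by
  rw [smul_defZ, MonoidAlgebra.of_apply, augHom_single, one_mul]
  rfl

lemma fix_to_single {G : Type} [Group G] (H : Subgroup G) [H.Normal] (k : G)
    (m : MonoidAlgebra ℤ (G ⧸ H)) (hm : (MonoidAlgebra.of ℤ G k) • m = m) :
    MonoidAlgebra.single (QuotientGroup.mk k : G ⧸ H) (1:ℤ) * m = m := by
  rw [smul_defQ, MonoidAlgebra.of_apply, mapDomainRingHom_single] at hm
  exact hm

/-- The augmentation as a `ℤ[G]`-linear map `ℤ[G/H] → ℤ`. -/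
noncomputable def fplain {G : Type} [Group G] (H : Subgroup G) [H.Normal] :
    MonoidAlgebra ℤ (G ⧸ H) →ₗ[MonoidAlgebra ℤ G] ZTriv G where
  toFun := augHom (G ⧸ H)
  map_add' := fun a b => map_add _ a b
  map_smul' := fun r m => by
    simp only [RingHom.id_apply]
    rw [smul_defQ, map_mul, augHom_comp_mapDomain]
    exact (smul_defZ r (augHom (G ⧸ H) m)).symm

/-- **(Chirvasitu–Kanda, Proposition 2.2.)** For a profinite group `G`, the category of
discrete `G`-modules satisfies Ab4* — i.e. the product (computed in the category of discrete
modules as the largest discrete submodule of the plain product) of any family of epimorphisms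
is an epimorphism — if and only if `G` is finite. -/
theorem stmt_1 (G : Type) [Group G] [TopologicalSpace G] [IsTopologicalGroup G]
    [CompactSpace G] [T2Space G] [TotallyDisconnectedSpace G] :
    (∀ (ι : Type) (M N : ι → ModuleCat.{0} (MonoidAlgebra ℤ G)),
      (∀ i, IsDiscreteGMod G (M i)) → (∀ i, IsDiscreteGMod G (N i)) →
      ∀ f : ∀ i, M i →ₗ[MonoidAlgebra ℤ G] N i, (∀ i, Surjective (f i)) →
      ∀ y : ∀ i, N i, FixedBySomeOpenNormal G N y →
        ∃ x : ∀ i, M i, FixedBySomeOpenNormal G M x ∧ ∀ i, f i (x i) = y i)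
      ↔ Finite G := by
  constructor
  · intro hyp
    rw [← not_infinite_iff_finite]
    intro hinf
    classical
    let ι := OpenNormalSubgroup G
    let Mmod : ι → ModuleCat.{0} (MonoidAlgebra ℤ G) := fun H =>
      ModuleCat.of _ (MonoidAlgebra ℤ (G ⧸ H.toSubgroup))
    let Nmod : ι → ModuleCat.{0} (MonoidAlgebra ℤ G) := fun _ => ModuleCat.of _ (ZTriv G)
    let fH : ∀ H : ι, (Mmod H) →ₗ[MonoidAlgebra ℤ G] (Nmod H) := fun H =>
      fplain H.toSubgroup
    have hMdisc : ∀ H : ι, IsDiscreteGMod G (Mmod H) := by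
      intro H x
      exact ⟨H.toSubgroup, H.isNormal', H.toOpenSubgroup.isOpen,
        fun h hh => fixQ H.toSubgroup x h hh⟩
    have hNdisc : ∀ H : ι, IsDiscreteGMod G (Nmod H) := by
      intro H x
      exact ⟨⊤, inferInstance, by rw [Subgroup.coe_top]; exact isOpen_univ,
        fun h _ => fixZ h x⟩
    have hsurj : ∀ H : ι, Surjective (fH H) := by
      intro H n
      exact ⟨MonoidAlgebra.single 1 n, augHom_single _ 1 n⟩
    have hyfix : FixedBySomeOpenNormal G Nmod (fun _ => (1 : ZTriv G)) :=
      ⟨⊤, inferInstance, by rw [Subgroup.coe_top]; exact isOpen_univ,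
        fun H k _ => fixZ k 1⟩
    obtain ⟨x, ⟨K, hKn, hKo, hKfix⟩, hfx⟩ :=
      hyp ι Mmod Nmod hMdisc hNdisc fH hsurj (fun _ => (1 : ZTriv G)) hyfix
    -- K is infinite, hence nontrivial
    have hQfin : Finite (G ⧸ K) := K.quotient_finite_of_isOpen hKo
    have hKinf : Infinite K := by
      rw [← not_finite_iff_infinite]
      intro hKfin
      exact absurd (Finite.of_equiv _ (Subgroup.groupEquivQuotientProdSubgroup (s := K)).symm)
        (not_finite_iff_infinite.mpr hinf)
    obtain ⟨k', hk'⟩ := exists_ne (1 : K)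
    have hk : (k' : G) ∈ K := k'.2
    have hk1 : (k' : G) ≠ 1 := fun h => hk' (Subtype.ext h)
    -- find an open normal subgroup avoiding k'
    obtain ⟨W, hW, h1W, hWsub⟩ := compact_exists_isClopen_in_isOpen
      (isOpen_compl_singleton (x := (k' : G))) (by simpa using hk1.symm)
    obtain ⟨H, hH⟩ := IsTopologicalGroup.exist_openNormalSubgroup_sub_clopen_nhds_of_one hW h1W
    have hkH : (k' : G) ∉ H.toSubgroup := fun hmem => hWsub (hH hmem) rfl
    -- derive the contradiction
    have hQfin2 : Finite (G ⧸ H.toSubgroup) :=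
      H.toSubgroup.quotient_finite_of_isOpen H.toOpenSubgroup.isOpen
    have hq1 : (QuotientGroup.mk (k' : G) : G ⧸ H.toSubgroup) ≠ 1 := by
      rw [Ne, QuotientGroup.eq_one_iff]
      exact hkH
    have hfix' := fix_to_single H.toSubgroup (k' : G) (x H) (hKfix H (k' : G) hk)
    exact key hq1 (x H) hfix' (hfx H)
  · intro hfin ι M N hM hN f hf y hy
    choose x hx using fun i => hf i (y i)
    refine ⟨x, ⟨⊥, inferInstance, isOpen_discrete _, fun i k hk => ?_⟩, hx⟩
    have hk1 : k = 1 := Subgroup.mem_bot.mp hk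
    rw [hk1, map_one, one_smul]
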